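/- Let C ⊆ ℤ₂^d with 0 ∉ C, and let σ = Σ_{c∈C} c. If σ ≠ 0, then the cubelike graph G(C) has perfect state transfer from each vertex u to u + σ at time π/2 (under Laplacian dynamics). If σ = 0, then e^{i(π/2)L} is a unimodular multiple of the identity (G(C) is periodic with period π/2). -/

import Mathlib

open Matrix

noncomputable section CubelikeAux

/-- The sign character on `ZMod 2`. -/
def mC : ZMod 2 → ℂ := fun x => if x = 0 then 1 else -1

lemma zmod2_cases (x : ZMod 2) : x = 0 ∨ x = 1 := by revert x; decide

lemma mC_zero : mC 0 = 1 := rfl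

lemma mC_one : mC 1 = -1 := rfl

lemma mC_add (a b : ZMod 2) : mC (a + b) = mC a * mC b := by
  rcases zmod2_cases a with rfl | rfl <;> rcases zmod2_cases b with rfl | rfl <;>
    simp [mC] <;> norm_num <;> decide

lemma mC_sum {α : Type*} (s : Finset α) (f : α → ZMod 2) :
    mC (∑ a ∈ s, f a) = ∏ a ∈ s, mC (f a) := by
  classical
  induction s using Finset.cons_induction with
  | empty => simp [mC_zero]
  | cons a s ha ih => rw [Finset.sum_cons, Finset.prod_cons, mC_add, ih]

lemma mC_eq_neg_one_pow (x : ZMod 2) : mC x = (-1 : ℂ) ^ x.val := by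
  rcases zmod2_cases x with rfl | rfl <;> simp [mC, ZMod.val_one]

lemma one_sub_mC (x : ZMod 2) : 1 - mC x = 2 * (x.val : ℂ) := by
  rcases zmod2_cases x with rfl | rfl <;> simp [mC, ZMod.val_one] <;> norm_num

lemma zmod2_add_self (x : ZMod 2) : x + x = 0 := by revert x; decide

lemma pi_add_self {d : ℕ} (a : Fin d → ZMod 2) : a + a = 0 := by
  funext i; exact zmod2_add_self (a i)

lemma char2_add_eq_zero_iff {d : ℕ} (a b : Fin d → ZMod 2) : a + b = 0 ↔ a = b := by
  constructor
  · intro h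
    calc a = a + (b + b) := by rw [pi_add_self, add_zero]
    _ = a + b + b := by rw [add_assoc]
    _ = 0 + b := by rw [h]
    _ = b := zero_add b
  · rintro rfl; exact pi_add_self a

lemma card_pi_zmod2 (d : ℕ) : (Fintype.card (Fin d → ZMod 2) : ℂ) = 2 ^ d := by
  simp [Fintype.card_fun]

/-- Orthogonality of characters. -/
lemma sum_mC_dot {d : ℕ} (x : Fin d → ZMod 2) :
    ∑ v : Fin d → ZMod 2, mC (v ⬝ᵥ x) = if x = 0 then (2 ^ d : ℂ) else 0 := by
  by_cases hx : x = 0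
  · subst hx
    simp only [dotProduct_zero, mC_zero, Finset.sum_const, Finset.card_univ, nsmul_eq_mul,
      mul_one, if_true]
    exact card_pi_zmod2 d
  · rw [if_neg hx]
    obtain ⟨i, hi⟩ : ∃ i, x i ≠ 0 := by
      by_contra h
      push_neg at h
      exact hx (funext h)
    have hx1 : x i = 1 := (zmod2_cases (x i)).resolve_left hi
    set s : Fin d → ZMod 2 := Pi.single i 1 with hs
    have hsx : s ⬝ᵥ x = 1 := by rw [hs, single_dotProduct, one_mul, hx1]
    have hre : ∑ v : Fin d → ZMod 2, mC ((v + s) ⬝ᵥ x)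
        = ∑ v : Fin d → ZMod 2, mC (v ⬝ᵥ x) :=
      Fintype.sum_equiv (Equiv.addRight s) _ _ (fun v => rfl)
    have hneg : ∑ v : Fin d → ZMod 2, mC ((v + s) ⬝ᵥ x)
        = -∑ v : Fin d → ZMod 2, mC (v ⬝ᵥ x) := by
      rw [← Finset.sum_neg_distrib]
      refine Finset.sum_congr rfl fun v _ => ?_
      rw [add_dotProduct, mC_add, hsx, mC_one, mul_neg_one]
    rw [hre] at hneg
    have h3 : (∑ v : Fin d → ZMod 2, mC (v ⬝ᵥ x)) + ∑ v : Fin d → ZMod 2, mC (v ⬝ᵥ x)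
        = 0 := by linear_combination hneg
    exact add_self_eq_zero.mp h3

lemma key_sum {d : ℕ} (a b : Fin d → ZMod 2) :
    ∑ v : Fin d → ZMod 2, mC (v ⬝ᵥ a) * mC (v ⬝ᵥ b)
      = if a + b = 0 then (2 ^ d : ℂ) else 0 := by
  simp_rw [← mC_add, ← dotProduct_add]
  exact sum_mC_dot (a + b)

end CubelikeAux

/-- The time-`π/2` unitary generated by a real Hamiltonian `L`. -/
noncomputable def evolHalfPi {m : Type*} [Fintype m] [DecidableEq m]
    (L : Matrix m m ℝ) : Matrix m m ℂ :=
  NormedSpace.exp ((Complex.I * ((Real.pi / 2 : ℝ) : ℂ)) • L.map (fun x => (x : ℂ)))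

theorem cubelike_pst (d : ℕ) (C : Finset (Fin d → ZMod 2))
    (h0 : (0 : Fin d → ZMod 2) ∉ C)
    (L : Matrix (Fin d → ZMod 2) (Fin d → ZMod 2) ℝ)
    (hL : L = Matrix.of fun u v =>
      if u = v then (C.card : ℝ) else if u + v ∈ C then -1 else 0)
    (σ : Fin d → ZMod 2) (hσ : σ = ∑ c ∈ C, c) :
    (σ ≠ 0 → ∀ u, ‖(evolHalfPi L) u (u + σ)‖ = 1) ∧
    (σ = 0 → ∃ z : ℂ, ‖z‖ = 1 ∧ evolHalfPi L = z • 1) := by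
  set N : ℂ := (2 : ℂ) ^ d with hNdef
  have hN : N ≠ 0 := pow_ne_zero _ two_ne_zero
  set F : Matrix (Fin d → ZMod 2) (Fin d → ZMod 2) ℂ :=
    Matrix.of (fun u v => mC (u ⬝ᵥ v)) with hF
  have hFapp : ∀ u v, F u v = mC (u ⬝ᵥ v) := fun u v => rfl
  -- F * F = N • 1
  have hFF : F * F = N • (1 : Matrix (Fin d → ZMod 2) (Fin d → ZMod 2) ℂ) := by
    ext u w
    rw [Matrix.mul_apply]
    have : ∀ v, F u v * F v w = mC (v ⬝ᵥ u) * mC (v ⬝ᵥ w) := by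
      intro v
      rw [hFapp, hFapp, dotProduct_comm]
    simp_rw [this, key_sum]
    rw [Matrix.smul_apply, Matrix.one_apply, smul_eq_mul]
    by_cases h : u = w
    · rw [if_pos ((char2_add_eq_zero_iff u w).mpr h), if_pos h, mul_one]
    · rw [if_neg (fun hh => h ((char2_add_eq_zero_iff u w).mp hh)), if_neg h, mul_zero]
  set G : Matrix (Fin d → ZMod 2) (Fin d → ZMod 2) ℂ := N⁻¹ • F with hG
  have hFG : F * G = 1 := by
    rw [hG, Matrix.mul_smul, hFF, smul_smul, inv_mul_cancel₀ hN, one_smul]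
  have hFinv : F⁻¹ = G := Matrix.inv_eq_right_inv hFG
  have hFunit : IsUnit F :=
    (Matrix.isUnit_iff_isUnit_det F).2 (Matrix.isUnit_det_of_right_inverse hFG)
  set lam : (Fin d → ZMod 2) → ℂ := fun v => ∑ c ∈ C, (1 - mC (v ⬝ᵥ c)) with hlam
  -- diagonalization
  have hdiag : L.map (fun x => (x : ℂ)) = F * Matrix.diagonal lam * F⁻¹ := by
    rw [hFinv]
    ext u w
    rw [Matrix.mul_apply]
    have step : ∀ v, (F * Matrix.diagonal lam) u v * G v w
        = N⁻¹ * ∑ c ∈ C, (mC (v ⬝ᵥ (u + w)) - mC (v ⬝ᵥ (c + (u + w)))) := by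
      intro v
      rw [Matrix.mul_diagonal, hG, Matrix.smul_apply, hFapp, hFapp, smul_eq_mul]
      have h1 : mC (u ⬝ᵥ v) * lam v * (N⁻¹ * mC (v ⬝ᵥ w))
          = N⁻¹ * (lam v * (mC (v ⬝ᵥ u) * mC (v ⬝ᵥ w))) := by
        rw [dotProduct_comm u v]; ring
      rw [h1, hlam]
      congr 1
      rw [Finset.sum_mul]
      refine Finset.sum_congr rfl fun c _ => ?_
      simp only [dotProduct_add, mC_add]
      ring
    simp_rw [step]
    rw [← Finset.mul_sum, Finset.sum_comm]
    have inner : ∀ c ∈ C,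
        (∑ v : Fin d → ZMod 2, (mC (v ⬝ᵥ (u + w)) - mC (v ⬝ᵥ (c + (u + w)))))
        = (if u + w = 0 then N else 0) - (if c + (u + w) = 0 then N else 0) := by
      intro c _
      rw [Finset.sum_sub_distrib, sum_mC_dot, sum_mC_dot]
    rw [Finset.sum_congr rfl inner, Matrix.map_apply, hL]
    by_cases huw : u = w
    · subst huw
      have h00 : u + u = 0 := pi_add_self u
      have hc : ∀ c ∈ C, (if u + u = 0 then N else 0) - (if c + (u + u) = 0 then N else 0)
          = N := by
        intro c hc
        rw [if_pos h00, h00, add_zero]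
        have : ¬ c = 0 := fun h => h0 (h ▸ hc)
        rw [if_neg this, sub_zero]
      rw [Finset.sum_congr rfl hc, Finset.sum_const, nsmul_eq_mul]
      simp only [Matrix.of_apply, if_pos rfl]
      push_cast
      field_simp
    · have h00 : ¬ u + w = 0 := fun h => huw ((char2_add_eq_zero_iff u w).mp h)
      have hc : ∀ c ∈ C, (if u + w = 0 then N else 0) - (if c + (u + w) = 0 then N else 0)
          = - (if c = u + w then N else 0) := by
        intro c _
        rw [if_neg h00, zero_sub]
        congr 1
        simp [char2_add_eq_zero_iff c (u + w)]
      rw [Finset.sum_congr rfl hc, Finset.sum_neg_distrib, Finset.sum_ite_eq' C (u + w)]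
      simp only [Matrix.of_apply, if_neg huw]
      by_cases hmem : u + w ∈ C
      · rw [if_pos hmem, if_pos hmem]
        push_cast
        field_simp
      · rw [if_neg hmem, if_neg hmem]
        simp
  -- the exponential
  have hexp : evolHalfPi L = F * Matrix.diagonal (fun v => mC (v ⬝ᵥ σ)) * F⁻¹ := by
    unfold evolHalfPi
    rw [hdiag]
    set cc : ℂ := Complex.I * ((Real.pi / 2 : ℝ) : ℂ) with hcc
    have hsmul : cc • (F * Matrix.diagonal lam * F⁻¹)
        = F * Matrix.diagonal (fun v => cc * lam v) * F⁻¹ := by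
      rw [← Matrix.smul_mul, ← Matrix.mul_smul]
      congr 2
      rw [← Matrix.diagonal_smul]
      rfl
    have hfun : NormedSpace.exp (fun v : Fin d → ZMod 2 => cc * lam v)
        = fun v => mC (v ⬝ᵥ σ) := by
      rw [Pi.exp_def]
      funext v
      rw [← Complex.exp_eq_exp_ℂ]
      have hlamv : lam v = 2 * ((∑ x ∈ C, (v ⬝ᵥ x).val : ℕ) : ℂ) := by
        rw [hlam]
        push_cast
        rw [Finset.mul_sum]
        exact Finset.sum_congr rfl fun x _ => one_sub_mC _
      set n : ℕ := ∑ x ∈ C, (v ⬝ᵥ x).val with hn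
      have harg : cc * lam v = (n : ℂ) * (Real.pi * Complex.I) := by
        rw [hlamv, hcc]
        push_cast
        ring
      rw [harg, Complex.exp_nat_mul, Complex.exp_pi_mul_I]
      have hdotsum : v ⬝ᵥ σ = ∑ x ∈ C, v ⬝ᵥ x := by
        rw [hσ]
        simp only [dotProduct, Finset.sum_apply, Finset.mul_sum]
        exact Finset.sum_comm
      rw [hdotsum, mC_sum,
        Finset.prod_congr rfl (fun x _ => mC_eq_neg_one_pow (v ⬝ᵥ x)),
        Finset.prod_pow_eq_pow_sum]
    rw [hsmul, Matrix.exp_conj F _ hFunit, Matrix.exp_diagonal, hfun]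
  -- entries of the evolution
  have hentry : ∀ u w, evolHalfPi L u w = if w = u + σ then 1 else 0 := by
    intro u w
    rw [hexp, hFinv, Matrix.mul_apply]
    have step : ∀ v, (F * Matrix.diagonal (fun v => mC (v ⬝ᵥ σ))) u v * G v w
        = N⁻¹ * mC (v ⬝ᵥ (u + (σ + w))) := by
      intro v
      rw [Matrix.mul_diagonal, hG, Matrix.smul_apply, hFapp, hFapp, smul_eq_mul,
        dotProduct_comm u v, dotProduct_add, dotProduct_add, mC_add, mC_add]
      ring
    simp_rw [step]
    rw [← Finset.mul_sum, sum_mC_dot]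
    have hiff : u + (σ + w) = 0 ↔ w = u + σ := by
      rw [← add_assoc, char2_add_eq_zero_iff]
      exact eq_comm
    by_cases h : w = u + σ
    · rw [if_pos (hiff.mpr h), if_pos h, inv_mul_cancel₀ hN]
    · rw [if_neg (fun hh => h (hiff.mp hh)), if_neg h, mul_zero]
  constructor
  · intro _ u
    rw [hentry u (u + σ), if_pos rfl]
    simp
  · intro hs
    refine ⟨1, by simp, ?_⟩
    ext u w
    rw [hentry u w, one_smul, Matrix.one_apply, hs, add_zero]
    by_cases h : u = w
    · rw [if_pos h.symm, if_pos h]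
    · rw [if_neg (fun hh => h hh.symm), if_neg h]
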